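/- Let H be a hypergraph with h vertices and let G be a hypergraph equipped with a coloring c: V(G) → {1,…,h}. Then ColHom(G,H) = Σ_{I ⊆ {1,…,h}} (−1)^{h−|I|} · Hom(G(V_I), H), where V_I = {v ∈ V(G) : c(v) ∈ I} and G(V_I) is the induced subhypergraph of G on V_I (hyperedges entirely contained in V_I). -/

import Mathlib

open scoped Classical

noncomputable section

/-- A hypergraph: a finite vertex set and a finite set of hyperedges, with vertices in `ℕ`. -/
structure FinHypergraph where
  verts : Finset ℕ
  edges : Finset (Finset ℕ)

namespace FinHypergraph

/-- Well-formedness: every hyperedge is a nonempty subset of the vertex set. -/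
def Good (G : FinHypergraph) : Prop := ∀ e ∈ G.edges, e ⊆ G.verts ∧ e.Nonempty

/-- The rank of a hypergraph: the maximum arity of a hyperedge. -/
def rank (G : FinHypergraph) : ℕ := G.edges.sup Finset.card

/-- The induced `l`-trimmed subhypergraph of `G` on `S`. -/
def trim (G : FinHypergraph) (S : Finset ℕ) (l : ℕ∞) : FinHypergraph :=
  ⟨G.verts ∩ S,
    (G.edges.filter fun e => ((e \ S).card : ℕ∞) ≤ l ∧ (e ∩ S).Nonempty).image fun e => e ∩ S⟩

/-- The degree of a vertex: the number of hyperedges containing it. -/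
def degree (G : FinHypergraph) (v : ℕ) : ℕ := (G.edges.filter fun e => v ∈ e).card

/-- The `l`-degeneracy of a hypergraph: the least `κ` such that every nonempty induced
`l`-trimmed subhypergraph has a vertex of degree at most `κ`. -/
def degeneracy (G : FinHypergraph) (l : ℕ∞) : ℕ :=
  sInf {κ : ℕ | ∀ S ⊆ G.verts, S.Nonempty → ∃ v ∈ S, (G.trim S l).degree v ≤ κ}

/-- Two vertices are adjacent if some hyperedge contains both. -/
def Adj (G : FinHypergraph) (u v : ℕ) : Prop := ∃ e ∈ G.edges, u ∈ e ∧ v ∈ e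

/-- A hypergraph is connected if any two vertices are joined by a path of adjacencies. -/
def Connected (G : FinHypergraph) : Prop :=
  ∀ u ∈ G.verts, ∀ v ∈ G.verts, Relation.ReflTransGen G.Adj u v

/-- `D` is a connected component of `G`. -/
def IsComponent (G : FinHypergraph) (D : Finset ℕ) : Prop :=
  ∃ v ∈ G.verts, D = G.verts.filter fun u => Relation.ReflTransGen G.Adj v u

/-- The induced subhypergraph (only hyperedges entirely inside `S`). -/
def induce (G : FinHypergraph) (S : Finset ℕ) : FinHypergraph :=
  ⟨G.verts ∩ S, G.edges.filter fun e => e ⊆ S⟩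

end FinHypergraph

/-- `f` is a homomorphism from `H` to `G`. -/
def IsHom (H G : FinHypergraph) (f : ℕ → ℕ) : Prop :=
  (∀ v ∈ H.verts, f v ∈ G.verts) ∧ ∀ e ∈ H.edges, e.image f ∈ G.edges

/-- `Hom(G,H)`: the number of homomorphisms from `H` to `G`
(normalized to be `0` off `V(H)` so that the set is finite). -/
def homCount (G H : FinHypergraph) : ℕ :=
  Set.ncard {f : ℕ → ℕ | IsHom H G f ∧ ∀ v ∉ H.verts, f v = 0}

/-- `Homr(G,H)`: the number of arity-preserving homomorphisms from `H` to `G`. -/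
def homrCount (G H : FinHypergraph) : ℕ :=
  Set.ncard {f : ℕ → ℕ | IsHom H G f ∧ (∀ e ∈ H.edges, (e.image f).card = e.card) ∧
    ∀ v ∉ H.verts, f v = 0}

/-- FinHypergraph isomorphism. -/
def Isomorphic (H H' : FinHypergraph) : Prop :=
  ∃ f : ℕ → ℕ, Set.BijOn f ↑H.verts ↑H'.verts ∧
    H'.edges = H.edges.image fun e => e.image f

/-- The quotient of `H` under the partition of `V(H)` into the fibers of `f`. -/
def quotientBy (H : FinHypergraph) (f : ℕ → ℕ) : FinHypergraph :=
  ⟨H.verts.image f, H.edges.image fun e => e.image f⟩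

/-- `H'` is a quotient of `H` (by some partition of `V(H)`). -/
def IsQuotient (H H' : FinHypergraph) : Prop := ∃ f : ℕ → ℕ, H' = quotientBy H f

/-- Each fiber of `f` induces a connected (trimmed) subhypergraph of `H`. -/
def ContractMap (H : FinHypergraph) (f : ℕ → ℕ) : Prop :=
  ∀ w : ℕ, (H.trim (H.verts.filter fun v => f v = w) ⊤).Connected

/-- `H'` belongs to the contract set `Q^c(H)`: it is a quotient of `H` by a partition
all of whose parts induce connected subhypergraphs of `H`. -/
def IsContractQuotient (H H' : FinHypergraph) : Prop :=
  ∃ f : ℕ → ℕ, ContractMap H f ∧ H' = quotientBy H f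

/-- `α(H')`: the number of partitions `τ` of `V(H)` with connected parts with `H/τ ≅ H'`. -/
def alphaCount (H H' : FinHypergraph) : ℕ :=
  Set.ncard {P : Finset (Finset ℕ) | ∃ f : ℕ → ℕ, ContractMap H f ∧
    Isomorphic (quotientBy H f) H' ∧
    P = (H.verts.image f).image fun w => H.verts.filter fun v => f v = w}

/-- `|Aut(H')|`: the number of automorphisms of `H'`. -/
def autCount (H' : FinHypergraph) : ℕ :=
  Set.ncard {f : ℕ → ℕ | (∀ v ∉ H'.verts, f v = v) ∧ Set.BijOn f ↑H'.verts ↑H'.verts ∧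
    H'.edges.image (fun e => e.image f) = H'.edges}

/-- The arc relation of the `l`-skeleton of the DAH obtained by ordering `G` by `π`. -/
def SkelArc (G : FinHypergraph) (π : ℕ → ℕ) (l : ℕ∞) (u v : ℕ) : Prop :=
  ∃ e ∈ G.edges, u ∈ e ∧ v ∈ e ∧ π u < π v ∧
    ((e.filter fun w => π w < π u).card : ℕ∞) ≤ l

/-- The `l`-outdegree of a vertex in the DAH `(G, π)`. -/
def loutdeg (G : FinHypergraph) (π : ℕ → ℕ) (l : ℕ∞) (u : ℕ) : ℕ :=
  (G.verts.filter fun v => SkelArc G π l u v).card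

/-- Vertices reachable from `v` by a directed path. -/
def Reach (Adj : ℕ → ℕ → Prop) (v : ℕ) : Set ℕ := {u | Relation.ReflTransGen Adj v u}

/-- Vertices reachable from a set `A`. -/
def ReachSet (Adj : ℕ → ℕ → Prop) (A : Set ℕ) : Set ℕ :=
  {u | ∃ a ∈ A, Relation.ReflTransGen Adj a u}

/-- The sources of a DAG: vertices with no incoming arc. -/
def sourcesOf (V : Finset ℕ) (Adj : ℕ → ℕ → Prop) : Finset ℕ :=
  V.filter fun v => ¬ ∃ u ∈ V, Adj u v

/-- `b` lies on the (unique) path between `i` and `j` in `T`. -/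
def OnPath {n : ℕ} (T : SimpleGraph (Fin n)) (i j b : Fin n) : Prop :=
  ∃ p : T.Walk i j, p.IsPath ∧ b ∈ p.support

/-- `(T, β)` is a DAG-tree decomposition of the DAG `(V, Adj)`. -/
def IsDTD (V : Finset ℕ) (Adj : ℕ → ℕ → Prop) {n : ℕ}
    (T : SimpleGraph (Fin n)) (β : Fin n → Finset ℕ) : Prop :=
  T.IsTree ∧ (∀ i, β i ⊆ sourcesOf V Adj) ∧ (∀ s ∈ sourcesOf V Adj, ∃ i, s ∈ β i) ∧
    ∀ i j b, OnPath T i j b →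
      ReachSet Adj ↑(β i) ∩ ReachSet Adj ↑(β j) ⊆ ReachSet Adj ↑(β b)

/-- The DAG-treewidth of the DAG `(V, Adj)`. -/
def dagTreewidth (V : Finset ℕ) (Adj : ℕ → ℕ → Prop) : ℕ :=
  sInf {w : ℕ | ∃ (n : ℕ) (T : SimpleGraph (Fin n)) (β : Fin n → Finset ℕ),
    IsDTD V Adj T β ∧ ∀ i, (β i).card ≤ w}

/-- The `l`-DAG-treewidth of the DAH `(H, π)`. -/
def ldtwOriented (H : FinHypergraph) (π : ℕ → ℕ) (l : ℕ∞) : ℕ :=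
  dagTreewidth H.verts (SkelArc H π l)

/-- The `l`-DAG-treewidth of an undirected hypergraph:
the maximum over all acyclic orientations. -/
def ldtw (H : FinHypergraph) (l : ℕ∞) : ℕ :=
  sSup {w : ℕ | ∃ π : ℕ → ℕ, Set.InjOn π ↑H.verts ∧ w = ldtwOriented H π l}

/-- `f` is a DAH homomorphism from `(K, πK)` to `(G, πG)`. -/
def IsDAHHom (K : FinHypergraph) (πK : ℕ → ℕ) (G : FinHypergraph) (πG : ℕ → ℕ)
    (f : ℕ → ℕ) : Prop :=
  (∀ v ∈ K.verts, f v ∈ G.verts) ∧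
    ∀ e ∈ K.edges, e.image f ∈ G.edges ∧
      ∀ u ∈ e, ∀ v ∈ e, πK u < πK v → πG (f u) < πG (f v)

/-- The number of DAH homomorphisms from `(K, πK)` to `(G, πG)`. -/
def dahHomCount (G : FinHypergraph) (πG : ℕ → ℕ) (K : FinHypergraph) (πK : ℕ → ℕ) : ℕ :=
  Set.ncard {f : ℕ → ℕ | IsDAHHom K πK G πG f ∧ ∀ v ∉ K.verts, f v = 0}

/-- Two orderings of `H` give isomorphic acyclic orientations. -/
def OrientIso (H : FinHypergraph) (π₁ π₂ : ℕ → ℕ) : Prop :=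
  ∃ g : ℕ → ℕ, Set.BijOn g ↑H.verts ↑H.verts ∧
    (H.edges.image fun e => e.image g) = H.edges ∧
    ∀ u ∈ H.verts, ∀ v ∈ H.verts, (π₁ u < π₁ v ↔ π₂ (g u) < π₂ (g v))

/-- The vertices of `H` that are `l`-reachable from the set `S` in the DAH `(H, π)`. -/
def reachClosure (H : FinHypergraph) (π : ℕ → ℕ) (l : ℕ∞) (S : Set ℕ) : Finset ℕ :=
  H.verts.filter fun v => v ∈ ReachSet (SkelArc H π l) S

/-- `H⃗[S]_l`: the sub-DAH induced (0-trimmed) on the vertices `l`-reachable from `S`. -/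
def subDAH (H : FinHypergraph) (π : ℕ → ℕ) (l : ℕ∞) (S : Set ℕ) : FinHypergraph :=
  H.trim (reachClosure H π l S) 0

/-- `B'` is a child of `B` in the tree `T` rooted at `root`. -/
def IsChild {n : ℕ} (T : SimpleGraph (Fin n)) (root B B' : Fin n) : Prop :=
  T.Adj B B' ∧ OnPath T root B' B

/-- `Γ(B)`: the union of the bags in the subtree of `T` rooted at `B`. -/
def GammaSet {n : ℕ} (T : SimpleGraph (Fin n)) (root : Fin n)
    (β : Fin n → Finset ℕ) (B : Fin n) : Set ℕ :=
  {s | ∃ i, OnPath T root i B ∧ s ∈ β i}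

/-- `ext(φ, K⃗, G⃗)` relative to the agreement domain `dom`: the number of DAH homomorphisms
from `(K, πK)` to `(G, πG)` that agree with `φ` on `V(K) ∩ dom`. -/
def extCount (K : FinHypergraph) (πK : ℕ → ℕ) (G : FinHypergraph) (πG : ℕ → ℕ)
    (dom : Set ℕ) (φ : ℕ → ℕ) : ℕ :=
  Set.ncard {ψ : ℕ → ℕ | IsDAHHom K πK G πG ψ ∧ (∀ v ∉ K.verts, ψ v = 0) ∧
    ∀ v ∈ (↑K.verts : Set ℕ) ∩ dom, ψ v = φ v}

/-- The hyperedges `E_i` associated to a core `C` and a component `D`. -/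
def obstructionEdges (H : FinHypergraph) (C D : Finset ℕ) : Finset (Finset ℕ) :=
  H.edges.filter fun e => e ⊆ C ∪ D ∧ 1 < e.card

/-- `H` is an `l`-obstruction (a member of `𝓗_l`). -/
def IsLObstruction (l : ℕ∞) (H : FinHypergraph) : Prop :=
  ∃ k, 3 ≤ k ∧ ∃ C ⊆ H.verts, C.card = k ∧
    (∀ e ∈ (H.trim C l).edges, e.card ≤ 1) ∧
    (∀ D : Finset ℕ, (H.trim (H.verts \ C) ⊤).IsComponent D →
      ¬ C ⊆ (obstructionEdges H C D).biUnion id) ∧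
    ∃ Dmap : ℕ → Finset ℕ, Set.InjOn Dmap ↑C ∧
      ∀ c ∈ C, (H.trim (H.verts \ C) ⊤).IsComponent (Dmap c) ∧
        C.erase c ⊆ (obstructionEdges H C (Dmap c)).biUnion id ∧
        ∀ e ∈ obstructionEdges H C (Dmap c), c ∉ e

/-- `H` is `𝓗_l` ITS free: no induced ∞-trimmed subhypergraph is an `l`-obstruction. -/
def ITSFree (l : ℕ∞) (H : FinHypergraph) : Prop :=
  ∀ S ⊆ H.verts, ¬ IsLObstruction l (H.trim S ⊤)

/-- The hypergraph `(Hv, He)` is an `l`-connector of `X ⊆ Hv`. -/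
def IsConnector (l : ℕ∞) (Hv : Finset ℕ) (He : Finset (Finset ℕ)) (X : Finset ℕ) : Prop :=
  X ⊆ Hv ∧ FinHypergraph.Connected ⟨Hv, He⟩ ∧
    (∀ e ∈ He, 2 ≤ (e ∩ X).card → l < ((e \ X).card : ℕ∞)) ∧
    ∃ V' : Finset ℕ, (FinHypergraph.trim ⟨Hv, He⟩ (Hv \ X) ⊤).IsComponent V' ∧
      ∀ xx ∈ X, ∃ v ∈ V', ∃ e ∈ He, xx ∈ e ∧ v ∈ e

/-- Witness data for membership of `H` in `𝓗_{l,k}`. -/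
def InHlkWitness (l : ℕ∞) (k : ℕ) (H : FinHypergraph)
    (x : ℕ → ℕ) (Vp : ℕ → Finset ℕ) (Ep : ℕ → Finset (Finset ℕ)) : Prop :=
  Set.InjOn x ↑(Finset.range k) ∧
  (∀ i < k, ∀ j < k, i ≠ j → Disjoint (Vp i) (Vp j)) ∧
  (∀ i < k, Disjoint (Vp i) ((Finset.range k).image x)) ∧
  H.verts = (Finset.range k).image x ∪ (Finset.range k).biUnion Vp ∧
  (∀ i < k, ∀ j < k, i ≠ j → Disjoint (Ep i) (Ep j)) ∧
  H.edges = (Finset.range k).biUnion Ep ∧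
  ∀ i < k,
    (∀ e ∈ Ep i, e ⊆ Vp i ∪ (((Finset.range k).image x).erase (x i))) ∧
    IsConnector l (Vp i ∪ (((Finset.range k).image x).erase (x i))) (Ep i)
      (((Finset.range k).image x).erase (x i))

/-- `H ∈ 𝓗_{l,k}`. -/
def InHlk (l : ℕ∞) (k : ℕ) (H : FinHypergraph) : Prop :=
  ∃ x Vp Ep, InHlkWitness l k H x Vp Ep

/-- The DAG `(V, Adj)` contains a `k`-reachable-cycle. -/
def HasReachCycle (V : Finset ℕ) (Adj : ℕ → ℕ → Prop) (k : ℕ) : Prop :=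
  ∃ x y : ZMod k → ℕ, Function.Injective x ∧ Function.Injective y ∧
    (∀ i, x i ∈ V) ∧ (∀ i, y i ∈ V) ∧
    (∀ i, x i ∈ Reach Adj (y i) ∧ x (i + 1) ∈ Reach Adj (y i)) ∧
    ∀ v ∈ V, 2 ≤ (Set.range x ∩ Reach Adj v).ncard →
      ∃ i, Set.range x ∩ Reach Adj v = {x i, x (i + 1)}

/-- `(x, y)` form a `k`-reachable-simplex in the DAG `(V, Adj)`. -/
def IsReachSimplexPair (V : Finset ℕ) (Adj : ℕ → ℕ → Prop) {k : ℕ}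
    (x y : Fin k → ℕ) : Prop :=
  Function.Injective x ∧ Function.Injective y ∧
    (∀ i, x i ∈ V) ∧ (∀ i, y i ∈ V) ∧
    (∀ i j, j ≠ i → x j ∈ Reach Adj (y i)) ∧
    ¬ ∃ v ∈ V, ∀ i, x i ∈ Reach Adj v

/-- The DAG `(V, Adj)` contains a `k`-reachable-simplex. -/
def HasReachSimplex (V : Finset ℕ) (Adj : ℕ → ℕ → Prop) (k : ℕ) : Prop :=
  ∃ x y : Fin k → ℕ, IsReachSimplexPair V Adj x y

/-- `F` is α-acyclic. -/
def IsAlphaAcyclic (F : FinHypergraph) : Prop :=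
  ∃ (n : ℕ) (T : SimpleGraph (Fin n)) (f : Fin n → Finset ℕ),
    T.IsTree ∧ Function.Injective f ∧ (∀ i, f i ∈ F.edges) ∧
    (∀ e ∈ F.edges, ∃ i, f i = e) ∧
    ∀ i j b, OnPath T i j b → f i ∩ f j ⊆ f b

/-- The reachability hypergraph of the DAG `(V, Adj)`. -/
def reachHypergraph (V : Finset ℕ) (Adj : ℕ → ℕ → Prop) : FinHypergraph :=
  ⟨V, (sourcesOf V Adj).image fun s => V.filter fun v => v ∈ Reach Adj s⟩

/-- The clique completion of a hypergraph. -/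
def cliqueCompletion (H : FinHypergraph) : SimpleGraph ℕ where
  Adj u v := u ≠ v ∧ ∃ e ∈ H.edges, u ∈ e ∧ v ∈ e
  symm := by
    refine ⟨?_⟩
    intro u v h
    obtain ⟨huv, e, he, hu, hv⟩ := h
    exact ⟨huv.symm, e, he, hv, hu⟩
  loopless := by
    refine ⟨?_⟩
    intro u h
    exact h.1 rfl

/-- `G` has an induced cycle on `n` vertices. -/
def HasInducedCycle (G : SimpleGraph ℕ) (n : ℕ) : Prop :=
  ∃ f : ZMod n → ℕ, Function.Injective f ∧
    ∀ i j : ZMod n, G.Adj (f i) (f j) ↔ (j = i + 1 ∨ i = j + 1)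

/-- The number of colorful homomorphisms from `H` to `G` under the coloring `c`
(with color set `{1, …, |V(H)|}`). -/
def colHomCount (G H : FinHypergraph) (c : ℕ → ℕ) : ℕ :=
  Set.ncard {f : ℕ → ℕ | IsHom H G f ∧ (∀ v ∉ H.verts, f v = 0) ∧
    Set.BijOn (fun v => c (f v)) ↑H.verts ↑(Finset.Icc 1 H.verts.card)}

/-- The tensor product of hypergraphs (vertex pairs encoded by `Nat.pair`). -/
def tensor (G H : FinHypergraph) : FinHypergraph :=
  ⟨(G.verts ×ˢ H.verts).image fun p => Nat.pair p.1 p.2,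
    ((G.verts ×ˢ H.verts).image fun p => Nat.pair p.1 p.2).powerset.filter fun e =>
      (e.image fun m => (Nat.unpair m).1) ∈ G.edges ∧
      (e.image fun m => (Nat.unpair m).2) ∈ H.edges⟩

/-- `Sub(G,H)`: the number of subhypergraphs of `G` isomorphic to `H`. -/
def subCount (G H : FinHypergraph) : ℕ :=
  Set.ncard {p : Finset ℕ × Finset (Finset ℕ) |
    p.1 ⊆ G.verts ∧ (∀ e ∈ p.2, e ∈ G.edges ∧ e ⊆ p.1) ∧ Isomorphic H ⟨p.1, p.2⟩}

/-- Vertex renaming used in the construction of `G^H_l`: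
core vertices go to the matching vertex of the colorful hyperedge `e` of `G`,
vertices of `H'` outside the core go to their fresh copy indexed by `e`, and
vertices outside `H'` go to their unique copy. -/
def liftVert (S X : Finset ℕ) (π c : ℕ → ℕ) (e : Finset ℕ) (v : ℕ) : ℕ :=
  if v ∈ X then Nat.pair 0 ((e.filter fun u => c u = π v).sum id)
  else if v ∈ S then Nat.pair 2 (Nat.pair (Encodable.encode e) v)
  else Nat.pair 1 v

/-- The hypergraph `G^H_l` from the hardness construction. -/
def GHl (H G : FinHypergraph) (S X : Finset ℕ) (Vp : ℕ → Finset ℕ) (π c : ℕ → ℕ)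
    (k : ℕ) : FinHypergraph :=
  ⟨(G.verts.image fun v => Nat.pair 0 v) ∪ ((H.verts \ S).image fun v => Nat.pair 1 v) ∪
      (Finset.range k).biUnion fun i =>
        (G.edges.filter fun e => e.card = k - 1 ∧ e.image c = (Finset.range k).erase i).biUnion
          fun e => (Vp i).image fun v => Nat.pair 2 (Nat.pair (Encodable.encode e) v),
    ((H.edges.filter fun e => e ⊆ H.verts \ S).image fun e => e.image fun v => Nat.pair 1 v) ∪
      (Finset.range k).biUnion fun i =>
        (G.edges.filter fun e => e.card = k - 1 ∧ e.image c = (Finset.range k).erase i).biUnion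
          fun e =>
            (H.edges.filter fun e' => ¬ e' ⊆ H.verts \ S ∧
                e' ⊆ X ∪ Vp i ∪ (H.verts \ S)).image
              fun e' => e'.image (liftVert S X π c e)⟩

/-- The coloring of `G^H_l`. -/
def GHlColor (π c : ℕ → ℕ) (m : ℕ) : ℕ :=
  if (Nat.unpair m).1 = 0 then c (Nat.unpair m).2
  else if (Nat.unpair m).1 = 1 then π (Nat.unpair m).2
  else π (Nat.unpair (Nat.unpair m).2).2

/-- The grouping of the vertices of `G^H_l`: copied vertices first,
then the vertices of `G`, then the vertices of `V^ext`. -/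
def GHlGroup (m : ℕ) : ℕ :=
  if (Nat.unpair m).1 = 2 then 0 else if (Nat.unpair m).1 = 0 then 1 else 2

lemma incl_excl {α : Type*} [DecidableEq α] (C U : Finset α) (hU : U ⊆ C) :
    (∑ I ∈ C.powerset, if U ⊆ I then ((-1:ℤ) ^ (C.card - I.card)) else 0) =
    if U = C then 1 else 0 := by
  rw [← Finset.sum_filter]
  have hbij : C.powerset.filter (fun I => U ⊆ I) = (C \ U).powerset.image (fun J => J ∪ U) := by
    ext I
    simp only [Finset.mem_filter, Finset.mem_powerset, Finset.mem_image]
    constructor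
    · rintro ⟨hIC, hUI⟩
      exact ⟨I \ U, fun x hx => Finset.mem_sdiff.2 ⟨hIC (Finset.mem_sdiff.1 hx).1,
        (Finset.mem_sdiff.1 hx).2⟩, by rw [Finset.sdiff_union_self_eq_union,
        Finset.union_eq_left.2 hUI]⟩
    · rintro ⟨J, hJ, rfl⟩
      exact ⟨Finset.union_subset (hJ.trans (Finset.sdiff_subset)) hU, Finset.subset_union_right⟩
  rw [hbij, Finset.sum_image (by
    intro J hJ J' hJ' hEq
    simp only [Finset.mem_coe, Finset.mem_powerset] at hJ hJ'
    have h1 : Disjoint J U := Finset.sdiff_disjoint.mono_left hJ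
    have h2 : Disjoint J' U := Finset.sdiff_disjoint.mono_left hJ'
    have := congrArg (fun s => s \ U) hEq
    simpa [Finset.union_sdiff_distrib, Finset.sdiff_eq_self_of_disjoint, h1, h2] using this)]
  have key : ∀ J ∈ (C \ U).powerset,
      ((-1:ℤ) ^ (C.card - (J ∪ U).card)) = (-1:ℤ)^(C\U).card * (-1:ℤ)^J.card := by
    intro J hJ
    rw [Finset.mem_powerset] at hJ
    have hd : Disjoint J U := Finset.sdiff_disjoint.mono_left hJ
    have hcard : (J ∪ U).card = J.card + U.card := Finset.card_union_of_disjoint hd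
    have hCU : (C \ U).card = C.card - U.card := Finset.card_sdiff_of_subset hU
    have hJle : J.card ≤ (C \ U).card := Finset.card_le_card hJ
    have hUC : U.card ≤ C.card := Finset.card_le_card hU
    have heq : C.card - (J ∪ U).card = (C \ U).card - J.card := by omega
    rw [heq]
    calc (-1:ℤ)^((C\U).card - J.card)
        = (-1:ℤ)^((C\U).card - J.card) * ((-1:ℤ)^J.card * (-1:ℤ)^J.card) := by
          rw [← pow_add, ← two_mul, pow_mul]; norm_num
      _ = (-1:ℤ)^(C\U).card * (-1:ℤ)^J.card := by
          rw [← mul_assoc, ← pow_add, Nat.sub_add_cancel hJle]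
  rw [Finset.sum_congr rfl key, ← Finset.mul_sum, Finset.sum_powerset_neg_one_pow_card]
  by_cases hUC : U = C
  · simp [hUC, Finset.sdiff_eq_empty_iff_subset.2 (le_refl C)]
  · have hne : C \ U ≠ ∅ := by
      intro hcon
      exact hUC (le_antisymm hU (Finset.sdiff_eq_empty_iff_subset.1 hcon))
    simp [hUC, hne]

theorem stmt12 (G H : FinHypergraph) (hG : G.Good) (hH : H.Good)
    (c : ℕ → ℕ) (hc : Set.MapsTo c ↑G.verts ↑(Finset.Icc 1 H.verts.card)) :
    (colHomCount G H c : ℤ) =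
      ∑ I ∈ (Finset.Icc 1 H.verts.card).powerset,
        (-1 : ℤ) ^ (H.verts.card - I.card) *
          (homCount (G.induce (G.verts.filter fun v => c v ∈ I)) H : ℤ) := by
  classical
  have hCcard : (Finset.Icc 1 H.verts.card).card = H.verts.card := by
    rw [Nat.card_Icc]; omega
  have hΩfin : Set.Finite {f : ℕ → ℕ | IsHom H G f ∧ ∀ v ∉ H.verts, f v = 0} := by
    rw [← Set.finite_coe_iff]
    let F : ↥{f : ℕ → ℕ | IsHom H G f ∧ ∀ v ∉ H.verts, f v = 0} →
        (↥H.verts → ↥G.verts) := fun f v => ⟨f.1 v.1, f.2.1.1 v.1 v.2⟩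
    have hinj : Function.Injective F := by
      intro f g hfg
      apply Subtype.ext
      funext v
      by_cases hv : v ∈ H.verts
      · exact congrArg Subtype.val (congrFun hfg ⟨v, hv⟩)
      · rw [f.2.2 v hv, g.2.2 v hv]
    exact Finite.of_injective F hinj
  have hUsub : ∀ f ∈ hΩfin.toFinset,
      (H.verts.image fun v => c (f v)) ⊆ Finset.Icc 1 H.verts.card := by
    intro f hf x hx
    rw [Set.Finite.mem_toFinset] at hf
    obtain ⟨v, hv, rfl⟩ := Finset.mem_image.1 hx
    exact_mod_cast hc (hf.1.1 v hv)
  -- Step A : colorful homs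
  have hcolset : {f : ℕ → ℕ | IsHom H G f ∧ (∀ v ∉ H.verts, f v = 0) ∧
      Set.BijOn (fun v => c (f v)) ↑H.verts ↑(Finset.Icc 1 H.verts.card)} =
      ↑(hΩfin.toFinset.filter fun f =>
        (H.verts.image fun v => c (f v)) = Finset.Icc 1 H.verts.card) := by
    ext f
    simp only [Set.mem_setOf_eq, Finset.coe_filter, Set.mem_setOf_eq, Set.Finite.mem_toFinset]
    constructor
    · rintro ⟨h1, h2, h3⟩
      refine ⟨⟨h1, h2⟩, Finset.Subset.antisymm ?_ ?_⟩
      · intro x hx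
        obtain ⟨v, hv, rfl⟩ := Finset.mem_image.1 hx
        exact_mod_cast hc (h1.1 v hv)
      · intro x hx
        obtain ⟨v, hv, hfv⟩ := h3.2.2 (by exact_mod_cast hx)
        exact Finset.mem_image.2 ⟨v, by exact_mod_cast hv, hfv⟩
    · rintro ⟨⟨h1, h2⟩, h3⟩
      refine ⟨h1, h2, ?_, ?_, ?_⟩
      · intro v hv
        exact hc (h1.1 v (by exact_mod_cast hv))
      · apply Finset.injOn_of_card_image_eq
        rw [show (H.verts.image fun v => c (f v)) = H.verts.image fun v => c (f v) from rfl, h3,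
          hCcard]
      · intro x hx
        have hx' : x ∈ H.verts.image fun v => c (f v) := by
          rw [h3]; exact_mod_cast hx
        obtain ⟨v, hv, rfl⟩ := Finset.mem_image.1 hx'
        exact ⟨v, by exact_mod_cast hv, rfl⟩
  have hcol : colHomCount G H c =
      (hΩfin.toFinset.filter fun f =>
        (H.verts.image fun v => c (f v)) = Finset.Icc 1 H.verts.card).card := by
    unfold colHomCount
    rw [hcolset, Set.ncard_coe_finset]
  -- Step B : homs into induced subhypergraphs
  have hhom : ∀ I : Finset ℕ,
      homCount (G.induce (G.verts.filter fun v => c v ∈ I)) H =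
      (hΩfin.toFinset.filter fun f => ∀ v ∈ H.verts, c (f v) ∈ I).card := by
    intro I
    have hset : {f : ℕ → ℕ | IsHom H (G.induce (G.verts.filter fun v => c v ∈ I)) f ∧
        ∀ v ∉ H.verts, f v = 0} =
        ↑(hΩfin.toFinset.filter fun f => ∀ v ∈ H.verts, c (f v) ∈ I) := by
      ext f
      simp only [Set.mem_setOf_eq, Finset.coe_filter, Set.mem_setOf_eq, Set.Finite.mem_toFinset]
      constructor
      · rintro ⟨⟨h1, h2⟩, h3⟩
        refine ⟨⟨⟨fun v hv => ?_, fun e he => ?_⟩, h3⟩, fun v hv => ?_⟩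
        · exact (Finset.mem_inter.1 (h1 v hv)).1
        · exact (Finset.mem_filter.1 (h2 e he)).1
        · exact (Finset.mem_filter.1 (Finset.mem_inter.1 (h1 v hv)).2).2
      · rintro ⟨⟨⟨h1, h2⟩, h3⟩, h4⟩
        refine ⟨⟨fun v hv => ?_, fun e he => ?_⟩, h3⟩
        · exact Finset.mem_inter.2 ⟨h1 v hv, Finset.mem_filter.2 ⟨h1 v hv, h4 v hv⟩⟩
        · refine Finset.mem_filter.2 ⟨h2 e he, ?_⟩
          intro x hx
          obtain ⟨u, hu, rfl⟩ := Finset.mem_image.1 hx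
          have huH : u ∈ H.verts := (hH e he).1 hu
          exact Finset.mem_filter.2 ⟨h1 u huH, h4 u huH⟩
    unfold homCount
    rw [hset, Set.ncard_coe_finset]
  -- Step C : sum manipulation
  have hterm : ∀ I ∈ (Finset.Icc 1 H.verts.card).powerset,
      (-1 : ℤ) ^ (H.verts.card - I.card) *
        (homCount (G.induce (G.verts.filter fun v => c v ∈ I)) H : ℤ) =
      ∑ f ∈ hΩfin.toFinset, (if (H.verts.image fun v => c (f v)) ⊆ I then
        ((-1:ℤ) ^ ((Finset.Icc 1 H.verts.card).card - I.card)) else 0) := by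
    intro I _
    rw [hhom I, Finset.card_filter]
    push_cast
    rw [Finset.mul_sum]
    apply Finset.sum_congr rfl
    intro f _
    rw [hCcard]
    simp only [mul_ite, mul_one, mul_zero]
    congr 1
    simp [Finset.image_subset_iff]
  rw [Finset.sum_congr rfl hterm, Finset.sum_comm]
  have hinner : ∀ f ∈ hΩfin.toFinset,
      (∑ I ∈ (Finset.Icc 1 H.verts.card).powerset,
        if (H.verts.image fun v => c (f v)) ⊆ I then
          ((-1:ℤ) ^ ((Finset.Icc 1 H.verts.card).card - I.card)) else 0) =
      if (H.verts.image fun v => c (f v)) = Finset.Icc 1 H.verts.card then 1 else 0 :=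
    fun f hf => incl_excl _ _ (hUsub f hf)
  rw [Finset.sum_congr rfl hinner, Finset.sum_boole, hcol]

end
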